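/- For every nonnegative integer n, the sum for i from 1 to n of binom(4i, 2i−1) · binom(4n−4i, 2n−2i) equals the sum for i from 0 to n−1 of binom(4i+2, 2i+1) · binom(4n−4i−2, 2n−2i−1). -/

import Mathlib

open Finset

namespace BinomAux

/-- central binomial coefficient as an integer -/
def cb (k : ℕ) : ℤ := (Nat.centralBinom k : ℤ)

/-- `binom(2k, k+1)` as an integer -/
def bb (k : ℕ) : ℤ := ((2*k).choose (k+1) : ℤ)

lemma cb_step (k : ℕ) : ((k : ℤ)+1) * cb (k+1) = 2*(2*k+1) * cb k := by
  have := Nat.succ_mul_centralBinom_succ k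
  have h : ((k+1) * (k+1).centralBinom : ℤ) = ((2 * (2*k+1) * k.centralBinom : ℕ) : ℤ) := by
    exact_mod_cast congrArg (Nat.cast : ℕ → ℤ) this
  push_cast at h
  unfold cb; linarith

lemma bb_eq (k : ℕ) : ((k : ℤ)+1) * bb k = k * cb k := by
  have := Nat.choose_succ_right_eq (2*k) k
  have h2 : 2*k - k = k := by omega
  rw [h2] at this
  have h : (((2*k).choose (k+1) * (k+1) : ℕ) : ℤ) = (((2*k).choose k * k : ℕ) : ℤ) := by
    exact_mod_cast congrArg (Nat.cast : ℕ → ℤ) this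
  push_cast at h
  unfold bb cb Nat.centralBinom; linarith

/-- plain convolution sum -/
def SS (ε : ℤ) (u : ℕ → ℤ) (M : ℕ) : ℤ := ∑ k ∈ range (M+1), ε^k * u k * cb (M-k)
/-- convolution weighted by `k` -/
def SK (ε : ℤ) (u : ℕ → ℤ) (M : ℕ) : ℤ := ∑ k ∈ range (M+1), ε^k * (k : ℤ) * u k * cb (M-k)
/-- convolution weighted by `M-k` -/
def TT (ε : ℤ) (u : ℕ → ℤ) (M : ℕ) : ℤ := ∑ k ∈ range (M+1), ε^k * u k * (((M-k : ℕ)) : ℤ) * cb (M-k)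

lemma TT_eq (ε : ℤ) (u : ℕ → ℤ) (M : ℕ) : TT ε u M = M * SS ε u M - SK ε u M := by
  unfold TT SS SK
  rw [mul_sum, ← sum_sub_distrib]
  refine sum_congr rfl ?_
  intro k hk
  have hkM : k ≤ M := by simpa using Nat.lt_succ_iff.mp (mem_range.mp hk)
  rw [Nat.cast_sub hkM]
  ring

lemma TT_shift (ε : ℤ) (u : ℕ → ℤ) (M : ℕ) :
    TT ε u (M+1) = 4 * TT ε u M + 2 * SS ε u M := by
  unfold TT SS
  rw [sum_range_succ]
  have hlast : (((M+1-(M+1) : ℕ)) : ℤ) = 0 := by norm_num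
  rw [hlast]
  rw [mul_sum, mul_sum, ← sum_add_distrib]
  have : ∀ k ∈ range (M+1),
      ε^k * u k * (((M+1-k : ℕ)) : ℤ) * cb (M+1-k)
      = 4 * (ε^k * u k * (((M-k : ℕ)) : ℤ) * cb (M-k)) + 2 * (ε^k * u k * cb (M-k)) := by
    intro k hk
    have hkM : k ≤ M := by simpa using Nat.lt_succ_iff.mp (mem_range.mp hk)
    have h1 : M+1-k = (M-k)+1 := by omega
    rw [h1]
    have := cb_step (M-k)
    push_cast
    linear_combination (ε^k * u k) * this
  rw [sum_congr rfl this]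
  ring


lemma SK_shift (ε : ℤ) (M : ℕ) :
    SK ε cb (M+1) = ε * (4 * SK ε cb M + 2 * SS ε cb M) := by
  unfold SK SS
  rw [sum_range_succ']
  have h0 : ε^0 * ((0:ℕ) : ℤ) * cb 0 * cb (M+1-0) = 0 := by norm_num
  rw [h0, add_zero]
  rw [mul_add, mul_sum, mul_sum, mul_sum, mul_sum, ← sum_add_distrib]
  refine sum_congr rfl ?_
  intro j hj
  have h1 : M+1-(j+1) = M-j := by omega
  rw [h1]
  have := cb_step j
  push_cast
  linear_combination (ε^(j+1) * cb (M-j)) * this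

lemma pow_refl {ε : ℤ} (hε : ε * ε = 1) {j M : ℕ} (h : j ≤ M) :
    ε^(M-j) = ε^M * ε^j := by
  have h1 : ε^j * ε^j = 1 := by rw [← mul_pow, hε, one_pow]
  have h2 : ε^(M-j) * ε^j = ε^M := by rw [← pow_add]; congr 1; omega
  calc ε^(M-j) = ε^(M-j) * (ε^j * ε^j) := by rw [h1, mul_one]
    _ = (ε^(M-j) * ε^j) * ε^j := by ring
    _ = ε^M * ε^j := by rw [h2]

lemma SS_refl {ε : ℤ} (hε : ε * ε = 1) (M : ℕ) : SS ε cb M = ε^M * SS ε cb M := by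
  unfold SS
  conv_lhs => rw [← Finset.sum_range_reflect]
  rw [mul_sum]
  refine sum_congr rfl ?_
  intro j hj
  have hjM : j ≤ M := by simpa using Nat.lt_succ_iff.mp (mem_range.mp hj)
  have h1 : M + 1 - 1 - j = M - j := by omega
  have h2 : M - (M - j) = j := by omega
  rw [h1, h2, pow_refl hε hjM]
  ring

lemma SK_refl {ε : ℤ} (hε : ε * ε = 1) (M : ℕ) : SK ε cb M = ε^M * TT ε cb M := by
  unfold SK TT
  conv_lhs => rw [← Finset.sum_range_reflect]
  rw [mul_sum]
  refine sum_congr rfl ?_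
  intro j hj
  have hjM : j ≤ M := by simpa using Nat.lt_succ_iff.mp (mem_range.mp hj)
  have h1 : M + 1 - 1 - j = M - j := by omega
  have h2 : M - (M - j) = j := by omega
  rw [h1, h2, pow_refl hε hjM]
  ring

lemma bb_conv (ε : ℤ) (M : ℕ) : SK ε bb M + SS ε bb M = SK ε cb M := by
  unfold SK SS
  rw [← sum_add_distrib]
  refine sum_congr rfl ?_
  intro k hk
  linear_combination (ε^k * cb (M-k)) * bb_eq k


lemma cb_zero : cb 0 = 1 := by simp [cb, Nat.centralBinom]
lemma cb_one : cb 1 = 2 := by norm_num [cb, Nat.centralBinom]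
lemma bb_zero : bb 0 = 0 := by simp [bb]
lemma SS_zero (ε : ℤ) (u : ℕ → ℤ) : SS ε u 0 = u 0 * cb 0 := by simp [SS]

lemma two_SK_one (M : ℕ) : 2 * SK 1 cb M = M * SS 1 cb M := by
  have h := SK_refl (ε := 1) (by norm_num) M
  rw [one_pow, TT_eq] at h
  linarith

/-- convolution of central binomials: `∑ cb k cb (M-k) = 4^M` -/
lemma conv_cb (M : ℕ) : SS 1 cb M = 4^M := by
  induction M with
  | zero => rw [SS_zero, cb_zero]; norm_num
  | succ M ih =>
    have h1 := two_SK_one (M+1)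
    have h2 := two_SK_one M
    have h3 := SK_shift 1 M
    have hc : ((M:ℤ)+1) * SS 1 cb (M+1) = ((M:ℤ)+1) * 4^(M+1) := by
      push_cast at h1 ⊢
      rw [ih] at h2 h3
      calc ((M:ℤ)+1) * SS 1 cb (M+1) = 2 * SK 1 cb (M+1) := by linarith
        _ = 2 * (4 * SK 1 cb M + 2 * 4^M) := by rw [h3]; ring
        _ = 4 * (2 * SK 1 cb M) + 4 * 4^M := by ring
        _ = 4 * ((M:ℤ) * 4^M) + 4 * 4^M := by rw [h2]
        _ = ((M:ℤ)+1) * 4^(M+1) := by ring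
    exact mul_left_cancel₀ (by positivity) hc

lemma neg_one_sq' : (-1 : ℤ) * (-1) = 1 := by norm_num
lemma neg_pow_even (m : ℕ) : (-1 : ℤ)^(2*m) = 1 := by rw [pow_mul]; norm_num
lemma neg_pow_odd (m : ℕ) : (-1 : ℤ)^(2*m+1) = -1 := by rw [pow_succ, neg_pow_even]; norm_num

lemma SS_neg_odd (m : ℕ) : SS (-1) cb (2*m+1) = 0 := by
  have h := SS_refl neg_one_sq' (2*m+1)
  rw [neg_pow_odd] at h
  linarith

lemma SK_neg_even (m : ℕ) : SK (-1) cb (2*m) = m * SS (-1) cb (2*m) := by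
  have h := SK_refl neg_one_sq' (2*m)
  rw [neg_pow_even, one_mul, TT_eq] at h
  push_cast at h
  linarith

lemma SK_neg_odd' (m : ℕ) : SK (-1) cb (2*m+1) = - TT (-1) cb (2*m+1) := by
  have h := SK_refl neg_one_sq' (2*m+1)
  rw [neg_pow_odd] at h
  linarith

/-- alternating convolution of central binomials at even index -/
lemma alt_conv_cb (m : ℕ) : SS (-1) cb (2*m) = 4^m * cb m := by
  induction m with
  | zero => rw [mul_zero, SS_zero, cb_zero]; norm_num
  | succ m ih =>
    have hodd := SS_neg_odd m
    have hTshift1 := TT_shift (-1) cb (2*m)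
    have hTT2m : TT (-1) cb (2*m) = (m : ℤ) * SS (-1) cb (2*m) := by
      rw [TT_eq, SK_neg_even]; push_cast; ring
    have hSKodd := SK_neg_odd' m
    have hSKsh := SK_shift (-1) (2*m+1)
    have h2m2 : 2*(m+1) = 2*m+1+1 := by ring
    have hSKe := SK_neg_even (m+1)
    rw [h2m2] at hSKe
    -- (m+1) * SS(2m+2) = SK(2m+2) = -(4*SK(2m+1) + 2*SS(2m+1)) = 4*TT(2m+1)
    --                  = 4*(4*TT(2m) + 2*SS(2m)) = 16 m SS(2m) + 8 SS(2m)
    have key : ((m:ℤ)+1) * SS (-1) cb (2*m+1+1) = (16*m+8) * SS (-1) cb (2*m) := by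
      push_cast at hSKe
      calc ((m:ℤ)+1) * SS (-1) cb (2*m+1+1) = SK (-1) cb (2*m+1+1) := by rw [hSKe]
        _ = -(4 * SK (-1) cb (2*m+1) + 2 * SS (-1) cb (2*m+1)) := by rw [SK_shift]; ring
        _ = 4 * TT (-1) cb (2*m+1) := by rw [hSKodd, hodd]; ring
        _ = 4 * (4 * TT (-1) cb (2*m) + 2 * SS (-1) cb (2*m)) := by rw [hTshift1]
        _ = (16*m+8) * SS (-1) cb (2*m) := by rw [hTT2m]; ring
    have hgoal : ((m:ℤ)+1) * SS (-1) cb (2*(m+1)) = ((m:ℤ)+1) * (4^(m+1) * cb (m+1)) := by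
      rw [show 2*(m+1) = 2*m+1+1 by ring, key, ih]
      have := cb_step m
      linear_combination (-(4^(m+1)) : ℤ) * this
    exact mul_left_cancel₀ (by positivity) hgoal


lemma SK_neg_even_val (m : ℕ) : SK (-1) cb (2*m) = m * (4^m * cb m) := by
  rw [SK_neg_even, alt_conv_cb]

lemma SK_neg_odd_val (m : ℕ) : SK (-1) cb (2*m+1) = -(4*m+2) * (4^m * cb m) := by
  rw [SK_neg_odd', TT_shift, TT_eq, SK_neg_even_val, alt_conv_cb]
  push_cast; ring

lemma two_SK_one_val (M : ℕ) : 2 * SK 1 cb M = M * 4^M := by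
  rw [two_SK_one, conv_cb]

lemma TTbb (ε : ℤ) (M : ℕ) : TT ε bb M = ((M:ℤ)+1) * SS ε bb M - SK ε cb M := by
  rw [TT_eq]
  have := bb_conv ε M
  linarith

lemma bb_rec (ε : ℤ) (M : ℕ) : ((M:ℤ)+2) * SS ε bb (M+1)
    = SK ε cb (M+1) - 4 * SK ε cb M + (4*(M:ℤ)+6) * SS ε bb M := by
  have h1 := TTbb ε (M+1)
  have h2 := TTbb ε M
  have h3 := TT_shift ε bb M
  push_cast at h1
  linarith

/-- `2 ∑ binom(2k,k+1) cb(M-k) = 2·4^M − cb(M+1)` -/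
lemma conv_bb (M : ℕ) : 2 * SS 1 bb M = 2*4^M - cb (M+1) := by
  induction M with
  | zero => rw [SS_zero, bb_zero, cb_one]; norm_num
  | succ M ih =>
    have hrec := bb_rec 1 M
    have hsk1 := two_SK_one_val (M+1)
    have hsk0 := two_SK_one_val M
    have hstep := cb_step (M+1)
    push_cast at hsk1 hstep
    have hgoal : ((M:ℤ)+2) * (2 * SS 1 bb (M+1)) = ((M:ℤ)+2) * (2*4^(M+1) - cb (M+1+1)) := by
      linear_combination 2*hrec + hsk1 - 4*hsk0 + (4*(M:ℤ)+6)*ih + hstep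
    exact mul_left_cancel₀ (by positivity) hgoal

/-- alternating versions, joint closed form -/
lemma alt_conv_bb (n : ℕ) :
    2 * SS (-1) bb (2*n) = cb (2*n+1) - 2*(4^n * cb n)
    ∧ 2 * SS (-1) bb (2*n+1) = cb (2*n+2) - 4*(4^n * cb (n+1)) := by
  induction n with
  | zero =>
    constructor
    · rw [show 2*0 = 0 from rfl, SS_zero, bb_zero, cb_one, cb_zero]; norm_num
    · show 2 * SS (-1) bb 1 = cb 2 - 4*(4^0 * cb 1)
      have h1 : SS (-1) bb 1 = (-1)^0 * bb 0 * cb 1 + (-1)^1 * bb 1 * cb 0 := by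
        unfold SS
        rw [sum_range_succ, sum_range_succ, sum_range_zero]
        norm_num
      have hbb1 : bb 1 = 1 := by norm_num [bb]
      have hcb2 : cb 2 = 6 := by
        have : Nat.centralBinom 2 = 6 := by decide
        rw [cb, this]; norm_num
      rw [h1, hbb1, hcb2, cb_zero, cb_one, bb_zero]; norm_num
  | succ n ih =>
    obtain ⟨ih1, ih2⟩ := ih
    -- part 1 at n+1 : uses M = 2n+1
    have hrec2 := bb_rec (-1) (2*n+1)
    have hskE : SK (-1) cb (2*n+1+1) = ((n:ℤ)+1) * (4^(n+1) * cb (n+1)) := by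
      have h := SK_neg_even_val (n+1)
      rw [show 2*(n+1) = 2*n+1+1 by ring] at h
      push_cast at h ⊢
      linarith
    have hskO := SK_neg_odd_val n
    have hstep2 := cb_step (2*n+2)
    have hstepn := cb_step n
    push_cast at hrec2 hstep2 hstepn
    have part1 : 2 * SS (-1) bb (2*(n+1)) = cb (2*(n+1)+1) - 2*(4^(n+1) * cb (n+1)) := by
      have hgoal : (2*(n:ℤ)+3) * (2 * SS (-1) bb (2*n+1+1))
          = (2*(n:ℤ)+3) * (cb (2*n+2+1) - 2*(4^(n+1) * cb (n+1))) := by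
        linear_combination 2*hrec2 + 2*hskE - 8*hskO + (8*(n:ℤ)+10)*ih2 - hstep2
          - (8*(4:ℤ)^n)*hstepn
      have h2 := mul_left_cancel₀ (show (2*(n:ℤ)+3) ≠ 0 by positivity) hgoal
      rw [show 2*(n+1)+1 = 2*n+2+1 by ring, show 2*(n+1) = 2*n+1+1 by ring]
      exact h2
    refine ⟨part1, ?_⟩
    -- part 2 at n+1 : uses M = 2(n+1)
    have hrec3 := bb_rec (-1) (2*(n+1))
    have hskO3 : SK (-1) cb (2*(n+1)+1) = -(4*((n:ℤ)+1)+2) * (4^(n+1) * cb (n+1)) := by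
      have h := SK_neg_odd_val (n+1)
      push_cast at h ⊢
      linarith
    have hskE3 : SK (-1) cb (2*(n+1)) = ((n:ℤ)+1) * (4^(n+1) * cb (n+1)) := by
      have h := SK_neg_even_val (n+1)
      push_cast at h ⊢
      linarith
    have hstep3 := cb_step (2*(n+1)+1)
    have hstepn1 := cb_step (n+1)
    push_cast at hrec3 hstep3 hstepn1
    have hgoal : (2*(n:ℤ)+4) * (2 * SS (-1) bb (2*(n+1)+1))
        = (2*(n:ℤ)+4) * (cb (2*(n+1)+1+1) - 4*(4^(n+1) * cb (n+1+1))) := by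
      linear_combination 2*hrec3 + 2*hskO3 - 8*hskE3 + (8*(n:ℤ)+14)*part1 - hstep3
        + (32*(4:ℤ)^n)*hstepn1
    have h2 := mul_left_cancel₀ (show (2*(n:ℤ)+4) ≠ 0 by positivity) hgoal
    rw [show 2*(n+1)+2 = 2*(n+1)+1+1 by ring]
    exact h2


lemma par_even (a : ℕ → ℤ) (n : ℕ) :
    (∑ k ∈ range (2*n+1), a k) + (∑ k ∈ range (2*n+1), (-1:ℤ)^k * a k)
      = 2 * ∑ i ∈ range (n+1), a (2*i) := by
  induction n with
  | zero => simp; ring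
  | succ n ih =>
    rw [show 2*(n+1)+1 = (2*n+1)+1+1 by ring, sum_range_succ (n := (2*n+1)+1),
      sum_range_succ (n := 2*n+1), sum_range_succ (n := (2*n+1)+1),
      sum_range_succ (n := 2*n+1), sum_range_succ (n := n+1)]
    rw [neg_pow_odd n, show (2*n+1)+1 = 2*(n+1) by ring, neg_pow_even (n+1)]
    linarith [ih]

lemma par_odd (a : ℕ → ℤ) (n : ℕ) :
    (∑ k ∈ range (2*n+1), a k) - (∑ k ∈ range (2*n+1), (-1:ℤ)^k * a k)
      = 2 * ∑ i ∈ range n, a (2*i+1) := by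
  induction n with
  | zero => simp
  | succ n ih =>
    rw [show 2*(n+1)+1 = (2*n+1)+1+1 by ring, sum_range_succ (n := (2*n+1)+1),
      sum_range_succ (n := 2*n+1), sum_range_succ (n := (2*n+1)+1),
      sum_range_succ (n := 2*n+1), sum_range_succ (n := n)]
    rw [neg_pow_odd n, show (2*n+1)+1 = 2*(n+1) by ring, neg_pow_even (n+1)]
    linarith [ih]

lemma key (n : ℕ) :
    (∑ i ∈ Icc 1 n, bb (2*i) * cb (2*n - 2*i))
      = ∑ i ∈ range n, cb (2*i+1) * cb (2*n - (2*i+1)) := by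
  have hpe := par_even (fun k => bb k * cb (2*n - k)) n
  have hpo := par_odd (fun k => cb k * cb (2*n - k)) n
  have hS1 : SS 1 bb (2*n) = ∑ k ∈ range (2*n+1), bb k * cb (2*n - k) := by
    unfold SS; exact sum_congr rfl fun k _ => by rw [one_pow, one_mul]
  have hS2 : SS (-1) bb (2*n) = ∑ k ∈ range (2*n+1), (-1:ℤ)^k * (bb k * cb (2*n - k)) := by
    unfold SS; exact sum_congr rfl fun k _ => by ring
  have hS3 : SS 1 cb (2*n) = ∑ k ∈ range (2*n+1), cb k * cb (2*n - k) := by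
    unfold SS; exact sum_congr rfl fun k _ => by rw [one_pow, one_mul]
  have hS4 : SS (-1) cb (2*n) = ∑ k ∈ range (2*n+1), (-1:ℤ)^k * (cb k * cb (2*n - k)) := by
    unfold SS; exact sum_congr rfl fun k _ => by ring
  have c1 := conv_bb (2*n)
  have c2 := (alt_conv_bb n).1
  have c3 := conv_cb (2*n)
  have c4 := alt_conv_cb n
  rw [← hS1] at hpe
  rw [← hS2] at hpe
  rw [← hS3, ← hS4] at hpo
  -- 4 * (even sum incl 0) = 4 * odd sum
  have big : 4 * (∑ i ∈ range (n+1), bb (2*i) * cb (2*n - 2*i))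
      = 4 * ∑ i ∈ range n, cb (2*i+1) * cb (2*n - (2*i+1)) := by
    have h42 : (4:ℤ)^(2*n) = 4^(2*n) := rfl
    linear_combination (-2)*hpe + 2*hpo + c1 + c2 - 2*c3 + 2*c4
  have cancel := mul_left_cancel₀ (show (4:ℤ) ≠ 0 by norm_num) big
  rw [← cancel]
  -- split off i = 0 term
  rw [Finset.sum_range_succ' (fun i => bb (2*i) * cb (2*n - 2*i)) n]
  show (∑ i ∈ Icc 1 n, bb (2*i) * cb (2*n - 2*i))
      = (∑ i ∈ range n, bb (2*(i+1)) * cb (2*n - 2*(i+1))) + bb (2*0) * cb (2*n - 2*0)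
  rw [show bb (2*0) * cb (2*n - 2*0) = 0 by rw [show 2*0 = 0 from rfl, bb_zero]; ring, add_zero]
  rw [← Finset.Ico_add_one_right_eq_Icc 1 n, Finset.sum_Ico_eq_sum_range]
  rw [show n + 1 - 1 = n from rfl]
  exact sum_congr rfl fun i _ => by rw [add_comm 1 i]


end BinomAux

open BinomAux in
/-- For every nonnegative integer `n`,
`∑_{i=1}^{n} binom(4i, 2i−1) binom(4n−4i, 2n−2i)
  = ∑_{i=0}^{n−1} binom(4i+2, 2i+1) binom(4n−4i−2, 2n−2i−1)`. -/
theorem binom_identity (n : ℕ) :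
    ∑ i ∈ Finset.Icc 1 n, (4 * i).choose (2 * i - 1) * (4 * n - 4 * i).choose (2 * n - 2 * i) =
      ∑ i ∈ Finset.range n,
        (4 * i + 2).choose (2 * i + 1) * (4 * n - 4 * i - 2).choose (2 * n - 2 * i - 1) := by
  have hk := key n
  have hL : ((∑ i ∈ Icc 1 n, (4*i).choose (2*i-1) * ((4*n - 4*i).choose (2*n - 2*i)) : ℕ) : ℤ)
      = ∑ i ∈ Icc 1 n, bb (2*i) * cb (2*n - 2*i) := by
    push_cast
    refine sum_congr rfl fun i hi => ?_
    obtain ⟨h1, h2⟩ := mem_Icc.mp hi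
    have e1 : (4*i).choose (2*i-1) = (2*(2*i)).choose (2*i+1) := by
      rw [show 2*(2*i) = 4*i by ring,
        ← Nat.choose_symm (show 2*i+1 ≤ 4*i by omega),
        show 4*i - (2*i+1) = 2*i-1 by omega]
    have e2 : (4*n - 4*i).choose (2*n - 2*i) = Nat.centralBinom (2*n - 2*i) := by
      rw [Nat.centralBinom, show 2*(2*n-2*i) = 4*n-4*i by omega]
    simp only [bb, cb]
    norm_cast
    rw [e1, e2]
  have hR : ((∑ i ∈ range n,
        (4*i+2).choose (2*i+1) * ((4*n - 4*i - 2).choose (2*n - 2*i - 1)) : ℕ) : ℤ)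
      = ∑ i ∈ range n, cb (2*i+1) * cb (2*n - (2*i+1)) := by
    push_cast
    refine sum_congr rfl fun i hi => ?_
    have h1 : i < n := mem_range.mp hi
    have e1 : (4*i+2).choose (2*i+1) = Nat.centralBinom (2*i+1) := by
      rw [Nat.centralBinom, show 2*(2*i+1) = 4*i+2 by ring]
    have e2 : (4*n - 4*i - 2).choose (2*n - 2*i - 1) = Nat.centralBinom (2*n - (2*i+1)) := by
      rw [Nat.centralBinom, show 2*(2*n-(2*i+1)) = 4*n-4*i-2 by omega,
        show 2*n-(2*i+1) = 2*n-2*i-1 by omega]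
    simp only [cb]
    norm_cast
    rw [e1, e2]
  exact_mod_cast hL.trans (hk.trans hR.symm)
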